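/- For every tree T = T₁ ∨ T₂, the cardinality of S_T satisfies |S_T| = C(|T|−1, |T₁|) · |S_{T₁}| · |S_{T₂}|, where C(a,b) denotes the binomial coefficient (with the conventions |S_|| = 1 and |S_•| = 1 for the one-vertex tree •). -/

import Mathlib

/-- The minimum of `a :: l` (computed by folding `min`) is a member of `a :: l`. -/
lemma foldr_min_mem (a : ℤ) : ∀ l : List ℤ, l.foldr min a ∈ a :: l := by
  intro l
  induction l with
  | nil => simp
  | cons b l ih =>
    simp only [List.foldr_cons]
    rcases min_choice b (l.foldr min a) with h | h
    · rw [h]; simp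
    · rw [h]
      rcases List.mem_cons.mp ih with h' | h'
      · simp [h']
      · simp [h']

/-- The planar binary tree `φ(I)` associated to a list `I` of (distinct) integers:
`φ` of the empty list is the empty tree `|`, and `φ(I) = φ(I₁) ∨ φ(I₂)` where
`I = I₁ · (min I) · I₂` is the splitting of `I` at its minimal entry. -/
def phi : List ℤ → Tree Unit
  | [] => Tree.nil
  | a :: l =>
    Tree.node ()
      (phi ((a :: l).take ((a :: l).idxOf (l.foldr min a))))
      (phi ((a :: l).drop ((a :: l).idxOf (l.foldr min a) + 1)))
termination_by l => l.length
decreasing_by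
  · have hm := foldr_min_mem a l
    have hk := List.idxOf_lt_length_iff.mpr hm
    simp only [List.length_take, List.length_cons, List.foldr_attach (f := min)] at *
    omega
  · simp only [List.length_drop, List.length_cons]
    omega

/-- The standardization of a list `I` of distinct integers: the list whose `j`-th entry is
the (1-indexed) position of `I_j` in the increasing ordering of the entries of `I`. -/
def stdz (I : List ℤ) : List ℤ :=
  I.map (fun x => ((I.filter (fun y => y < x)).length : ℤ) + 1)

/-- `l` is (the list of values of) a permutation of `{1, …, n}`. -/
def IsPermList (n : ℕ) (l : List ℤ) : Prop :=
  l.Perm ((List.range n).map (fun k => (k : ℤ) + 1))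

/-- `S_T`: the set of permutations `σ ∈ S_{|T|}` (identified with their lists of values
`(σ(1),…,σ(n))`) such that `φ(σ) = T`. -/
def STree (T : Tree Unit) : Set (List ℤ) :=
  {l | IsPermList T.numNodes l ∧ phi l = T}

/-! ### Auxiliary lemmas -/

lemma foldr_min_le (a : ℤ) (l : List ℤ) : ∀ x ∈ a :: l, l.foldr min a ≤ x := by
  induction l with
  | nil => simp
  | cons b t ih =>
    intro x hx
    simp only [List.foldr_cons]
    rcases List.mem_cons.mp hx with h | h
    · subst h
      exact le_trans (min_le_right _ _) (ih x (by simp))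
    · rcases List.mem_cons.mp h with h' | h'
      · subst h'; exact min_le_left _ _
      · exact le_trans (min_le_right _ _) (ih x (by simp [h']))

lemma foldr_min_eq (a m : ℤ) (l : List ℤ) (hm : m ∈ a :: l)
    (hle : ∀ x ∈ a :: l, m ≤ x) : l.foldr min a = m :=
  le_antisymm (foldr_min_le a l m hm) (hle _ (foldr_min_mem a l))

lemma indexOf_map_eq (f : ℤ → ℤ) (l : List ℤ) (m : ℤ) (hm : m ∈ l)
    (hinj : ∀ x ∈ l, f x = f m → x = m) :
    (l.map f).idxOf (f m) = l.idxOf m := by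
  induction l with
  | nil => simp
  | cons a t ih =>
    by_cases h : a = m
    · subst h; simp
    · have hfa : f a ≠ f m := fun hc => h (hinj a (by simp) hc)
      have hmt : m ∈ t := by
        rcases List.mem_cons.mp hm with h' | h'
        · exact absurd h'.symm h
        · exact h'
      rw [List.map_cons, List.idxOf_cons_ne _ hfa,
        List.idxOf_cons_ne _ h,
        ih hmt (fun x hx => hinj x (by simp [hx]))]

lemma phi_map_aux (f : ℤ → ℤ) : ∀ (N : ℕ) (l : List ℤ), l.length ≤ N →
    (∀ x ∈ l, ∀ y ∈ l, x < y → f x < f y) → phi (l.map f) = phi l := by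
  intro N
  induction N with
  | zero =>
    intro l hl _
    rw [List.length_eq_zero_iff.mp (Nat.le_zero.mp hl)]
    rfl
  | succ N ih =>
    intro l hl hmono
    match l with
    | [] => rfl
    | a :: t =>
      have hmem := foldr_min_mem a t
      set m := t.foldr min a with hm
      have hfle : ∀ x ∈ a :: t, f m ≤ f x := by
        intro x hx
        rcases eq_or_lt_of_le (foldr_min_le a t x hx) with h | h
        · exact le_of_eq (by rw [hm, h])
        · exact le_of_lt (hmono m hmem x hx h)
      have hfoldr : (t.map f).foldr min (f a) = f m := by
        apply foldr_min_eq
        · have : f m ∈ List.map f (a :: t) := List.mem_map_of_mem hmem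
          simpa using this
        · intro x hx
          have : x ∈ List.map f (a :: t) := by simpa using hx
          obtain ⟨y, hy, rfl⟩ := List.mem_map.mp this
          exact hfle y hy
      have hinj : ∀ x ∈ a :: t, f x = f m → x = m := by
        intro x hx hfx
        rcases lt_trichotomy x m with h | h | h
        · exact absurd hfx (ne_of_lt (hmono x hx m hmem h))
        · exact h
        · exact absurd hfx.symm (ne_of_lt (hmono m hmem x hx h))
      have hidx2 : ((a :: t).map f).idxOf (f m) = (a :: t).idxOf m :=
        indexOf_map_eq f (a :: t) m hmem hinj
      have hklt : (a :: t).idxOf m < (a :: t).length :=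
        List.idxOf_lt_length_iff.mpr hmem
      rw [List.map_cons, phi, phi, hfoldr, ← List.map_cons, hidx2,
        ← List.map_take, ← List.map_drop]
      congr 1
      · exact ih _ (by have := hklt; simp only [List.length_take, List.length_cons] at *; omega)
          (fun x hx y hy => hmono x (List.mem_of_mem_take hx) y (List.mem_of_mem_take hy))
      · exact ih _ (by have := hklt; simp only [List.length_drop, List.length_cons] at *; omega)
          (fun x hx y hy => hmono x (List.mem_of_mem_drop hx) y (List.mem_of_mem_drop hy))


lemma phi_nil : phi [] = Tree.nil := by rw [phi]

lemma phi_map (f : ℤ → ℤ) (l : List ℤ)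
    (hmono : ∀ x ∈ l, ∀ y ∈ l, x < y → f x < f y) : phi (l.map f) = phi l :=
  phi_map_aux f l.length l le_rfl hmono

lemma numNodes_phi_aux : ∀ (N : ℕ) (l : List ℤ), l.length ≤ N →
    (phi l).numNodes = l.length := by
  intro N
  induction N with
  | zero =>
    intro l hl
    rw [List.length_eq_zero_iff.mp (Nat.le_zero.mp hl), phi_nil]
    rfl
  | succ N ih =>
    intro l hl
    match l with
    | [] => rw [phi_nil]; rfl
    | a :: t =>
      have hmem := foldr_min_mem a t
      have hklt : (a :: t).idxOf (t.foldr min a) < (a :: t).length :=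
        List.idxOf_lt_length_iff.mpr hmem
      rw [phi]
      simp only [Tree.node, BinaryTree.numNodes]
      simp only [Tree.numNodes] at ih
      rw [ih _ (by have := hklt; simp only [List.length_take, List.length_cons] at *; omega),
        ih _ (by have := hklt; simp only [List.length_drop, List.length_cons] at *; omega)]
      have := hklt
      simp only [List.length_take, List.length_drop, List.length_cons] at *
      omega

lemma numNodes_phi (l : List ℤ) : (phi l).numNodes = l.length :=
  numNodes_phi_aux l.length l le_rfl

lemma indexOf_append_cons_self (m : ℤ) (l1 l2 : List ℤ) (h : m ∉ l1) :
    (l1 ++ m :: l2).idxOf m = l1.length := by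
  induction l1 with
  | nil => simp
  | cons a t ih =>
    have ha : a ≠ m := fun hc => h (by simp [hc])
    rw [List.cons_append, List.idxOf_cons_ne _ ha, ih (fun hc => h (by simp [hc]))]
    rfl

lemma phi_append (l1 l2 : List ℤ) (m : ℤ) (hlt : ∀ x ∈ l1 ++ l2, m < x) :
    phi (l1 ++ m :: l2) = Tree.node () (phi l1) (phi l2) := by
  obtain ⟨a, t, ht⟩ : ∃ a t, l1 ++ m :: l2 = a :: t := by
    cases l1 <;> exact ⟨_, _, rfl⟩
  have hmem : m ∈ a :: t := ht ▸ (by simp)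
  have hle : ∀ x ∈ a :: t, m ≤ x := by
    rw [← ht]
    intro x hx
    rcases List.mem_append.mp hx with h | h
    · exact le_of_lt (hlt x (by simp [h]))
    · rcases List.mem_cons.mp h with h' | h'
      · exact le_of_eq h'.symm
      · exact le_of_lt (hlt x (by simp [h']))
  have hfold : t.foldr min a = m := foldr_min_eq a m t hmem hle
  have hnm : m ∉ l1 := fun hc => absurd rfl (ne_of_gt (hlt m (by simp [hc])))
  have hidx : (a :: t).idxOf m = l1.length := by
    rw [← ht]; exact indexOf_append_cons_self m l1 l2 hnm
  rw [ht, phi, hfold, hidx, ← ht, List.take_left' rfl]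
  have hdrop : (l1 ++ m :: l2).drop (l1.length + 1) = l2 := by
    rw [show l1 ++ m :: l2 = (l1 ++ [m]) ++ l2 by simp]
    exact List.drop_left' (by simp)
  rw [hdrop]

lemma sorted_filter_lt : ∀ (v : List ℤ), List.Pairwise (· < ·) v → ∀ (i : ℕ) (hi : i < v.length),
    (v.filter (fun y => y < v[i])).length = i := by
  intro v
  induction v with
  | nil => intro _ i hi; simp at hi
  | cons a t ih =>
    intro hv i hi
    have ha : ∀ x ∈ t, a < x := fun _ h => List.rel_of_pairwise_cons hv h
    have ht : List.Pairwise (· < ·) t := hv.of_cons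
    match i with
    | 0 =>
      simp only [List.getElem_cons_zero]
      rw [List.filter_eq_nil_iff.mpr ?_]
      · rfl
      · intro x hx
        rcases List.mem_cons.mp hx with h | h
        · simp [h]
        · simp [not_lt.mpr (le_of_lt (ha x h))]
    | (j : ℕ) + 1 =>
      simp only [List.getElem_cons_succ]
      have hj : j < t.length := by simpa using hi
      have hmem : t[j] ∈ t := List.getElem_mem hj
      have hd : decide (a < t[j]) = true := decide_eq_true (ha _ hmem)
      rw [List.filter_cons, if_pos hd, List.length_cons, ih ht j hj]

lemma sorted_getD_filter (v : List ℤ) (hv : List.Pairwise (· < ·) v) (x : ℤ) (hx : x ∈ v) :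
    v.getD ((v.filter (fun y => y < x)).length) 0 = x := by
  obtain ⟨i, hi, rfl⟩ := List.mem_iff_getElem.mp hx
  rw [sorted_filter_lt v hv i hi, List.getD_eq_getElem _ _ hi]

lemma filter_length_eq_card (l : List ℤ) (hl : l.Nodup) (x : ℤ) :
    (l.filter (fun y => y < x)).length = (l.toFinset.filter (fun y => y < x)).card := by
  rw [← List.toFinset_card_of_nodup (hl.filter _), List.toFinset_filter]
  congr 1
  simp


lemma flatMap_sing (l : List ℕ) :
    (l.flatMap fun a => ([(a : ℤ)] : List ℤ)) = l.map (fun a : ℕ => (a : ℤ)) := by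
  induction l with
  | nil => rfl
  | cons a t ih => simp_all

lemma R_eq (n : ℕ) : ((List.range n).map (fun k => (k : ℤ) + 1))
    = (List.range n).map (fun k : ℕ => (k : ℤ) + 1) := by
  simp
  induction (List.range n) <;> simp_all

lemma isPermList_def (n : ℕ) (l : List ℤ) :
    IsPermList n l ↔ l.Perm ((List.range n).map (fun k : ℕ => (k : ℤ) + 1)) := by
  unfold IsPermList
  rw [R_eq]

lemma perm_toFinset {l1 l2 : List ℤ} (h : l1.Perm l2) : l1.toFinset = l2.toFinset := by
  ext x; simp [h.mem_iff]

lemma isPermList_length {n : ℕ} {l : List ℤ} (h : IsPermList n l) : l.length = n := by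
  rw [((isPermList_def n l).mp h).length_eq, List.length_map, List.length_range]

lemma range_map_nodup (n : ℕ) : ((List.range n).map (fun k : ℕ => (k : ℤ) + 1)).Nodup :=
  List.Nodup.map (fun a b hab => by omega) List.nodup_range

lemma range_map_toFinset (n : ℕ) :
    ((List.range n).map (fun k : ℕ => (k : ℤ) + 1)).toFinset = Finset.Icc 1 (n : ℤ) := by
  ext x
  simp only [List.mem_toFinset, List.mem_map, List.mem_range, Finset.mem_Icc]
  constructor
  · rintro ⟨k, hk, rfl⟩; omega
  · rintro ⟨h1, h2⟩; exact ⟨(x - 1).toNat, by omega, by omega⟩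

lemma isPermList_iff (n : ℕ) (l : List ℤ) :
    IsPermList n l ↔ l.Nodup ∧ l.toFinset = Finset.Icc 1 (n : ℤ) := by
  rw [isPermList_def]
  constructor
  · intro h
    exact ⟨h.nodup_iff.mpr (range_map_nodup n),
      (perm_toFinset h).trans (range_map_toFinset n)⟩
  · rintro ⟨h1, h2⟩
    exact List.perm_of_nodup_nodup_toFinset_eq h1 (range_map_nodup n)
      (h2.trans (range_map_toFinset n).symm)

lemma mem_permList {n : ℕ} {s : List ℤ} (hs : IsPermList n s) {x : ℤ} (hx : x ∈ s) :
    ∃ i : ℕ, i < n ∧ x = (i : ℤ) + 1 := by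
  have := ((isPermList_def n s).mp hs).mem_iff.mp hx
  simp only [List.mem_map, List.mem_range] at this
  obtain ⟨i, hi, hxi⟩ := this
  exact ⟨i, hi, hxi.symm⟩

lemma phi_stdz (l : List ℤ) (hl : l.Nodup) : phi (stdz l) = phi l := by
  unfold stdz
  apply phi_map
  intro x hx y hy hxy
  have key : (l.filter (fun z => z < x)).length < (l.filter (fun z => z < y)).length := by
    rw [filter_length_eq_card l hl x, filter_length_eq_card l hl y]
    apply Finset.card_lt_card
    constructor
    · intro z hz
      simp only [Finset.mem_filter] at hz ⊢
      exact ⟨hz.1, lt_trans hz.2 hxy⟩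
    · intro hsub
      have hxmem : x ∈ l.toFinset.filter (fun z => z < y) := by
        simp [List.mem_toFinset.mpr hx, hxy]
      have := hsub hxmem
      simp at this
  omega

lemma stdz_length (l : List ℤ) : (stdz l).length = l.length := by simp [stdz]

lemma stdz_isPermList (l : List ℤ) (hl : l.Nodup) : IsPermList l.length (stdz l) := by
  set v := l.toFinset.sort (· ≤ ·) with hv
  have hsort : List.Pairwise (· < ·) v := (Finset.sortedLT_sort _).pairwise
  have hvnd : v.Nodup := Finset.sort_nodup _ _
  have hvt : v.toFinset = l.toFinset := Finset.sort_toFinset _ _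
  have hlv : l.Perm v := List.perm_of_nodup_nodup_toFinset_eq hl hvnd hvt.symm
  have hlen : v.length = l.length := (hlv.length_eq).symm
  have hmapeq : v.map (fun x => ((l.filter (fun y => y < x)).length : ℤ) + 1)
      = (List.range l.length).map (fun k : ℕ => (k : ℤ) + 1) := by
    apply List.ext_getElem (by simp [hlen])
    intro i h1 h2
    simp only [List.getElem_map, List.getElem_range]
    have hiv : i < v.length := by simpa using h1
    have key : (l.filter (fun y => y < v[i])).length = i := by
      rw [(hlv.filter _).length_eq]
      exact sorted_filter_lt v hsort i hiv
    omega
  rw [isPermList_def]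
  unfold stdz
  exact (hlv.map _).trans (List.Perm.of_eq hmapeq)

/-- Embedding of a permutation list into a finite set of values. -/
def emb (A : Finset ℤ) (s : List ℤ) : List ℤ :=
  s.map (fun k => (A.sort (· ≤ ·)).getD (k - 1).toNat 0)

lemma emb_perm_sort (A : Finset ℤ) (s : List ℤ) (n : ℕ) (hs : IsPermList n s)
    (hc : A.card = n) : (emb A s).Perm (A.sort (· ≤ ·)) := by
  have h2 : ((List.range n).map (fun k : ℕ => (k : ℤ) + 1)).map
        (fun k => (A.sort (· ≤ ·)).getD (k - 1).toNat 0) = A.sort (· ≤ ·) := by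
    rw [List.map_map]
    apply List.ext_getElem (by simp [Finset.length_sort, hc])
    intro i h1 h2
    simp only [List.getElem_map, List.getElem_range, Function.comp]
    have hto : ((i : ℤ) + 1 - 1).toNat = i := by omega
    rw [hto, List.getD_eq_getElem _ _ h2]
  exact (((isPermList_def n s).mp hs).map _).trans (List.Perm.of_eq h2)

lemma emb_toFinset (A : Finset ℤ) (s : List ℤ) (n : ℕ) (hs : IsPermList n s)
    (hc : A.card = n) : (emb A s).toFinset = A :=
  (perm_toFinset (emb_perm_sort A s n hs hc)).trans (Finset.sort_toFinset _ _)

lemma emb_nodup (A : Finset ℤ) (s : List ℤ) (n : ℕ) (hs : IsPermList n s)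
    (hc : A.card = n) : (emb A s).Nodup :=
  ((emb_perm_sort A s n hs hc).nodup_iff).mpr (Finset.sort_nodup _ _)

lemma emb_length (A : Finset ℤ) (s : List ℤ) : (emb A s).length = s.length := by
  simp [emb]

lemma phi_emb (A : Finset ℤ) (s : List ℤ) (n : ℕ) (hs : IsPermList n s)
    (hc : A.card = n) : phi (emb A s) = phi s := by
  unfold emb
  apply phi_map
  intro x hx y hy hxy
  obtain ⟨i, hi, rfl⟩ := mem_permList hs hx
  obtain ⟨j, hj, rfl⟩ := mem_permList hs hy
  have hij : i < j := by omega
  have hpw := List.pairwise_iff_get.mp ((Finset.sortedLT_sort A).pairwise)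
  have htoi : ((i : ℤ) + 1 - 1).toNat = i := by omega
  have htoj : ((j : ℤ) + 1 - 1).toNat = j := by omega
  have hli : i < (A.sort (· ≤ ·)).length := by rw [Finset.length_sort]; omega
  have hlj : j < (A.sort (· ≤ ·)).length := by rw [Finset.length_sort]; omega
  rw [htoi, htoj, List.getD_eq_getElem _ _ hli, List.getD_eq_getElem _ _ hlj]
  have := hpw ⟨i, hli⟩ ⟨j, hlj⟩ hij
  simpa using this

lemma card_filter_sort (A : Finset ℤ) (i : ℕ) (hi : i < (A.sort (· ≤ ·)).length) :
    (A.filter (fun y => y < (A.sort (· ≤ ·))[i])).card = i := by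
  have h1 := sorted_filter_lt _ ((Finset.sortedLT_sort A).pairwise) i hi
  rw [filter_length_eq_card _ (Finset.sort_nodup _ _) _, Finset.sort_toFinset] at h1
  exact h1

lemma card_filter_lt_mem (A : Finset ℤ) (x : ℤ) (hx : x ∈ A) :
    (A.sort (· ≤ ·)).getD ((A.filter (fun y => y < x)).card) 0 = x := by
  have hxv : x ∈ A.sort (· ≤ ·) := (Finset.mem_sort _).mpr hx
  have h1 := sorted_getD_filter _ ((Finset.sortedLT_sort A).pairwise) x hxv
  rw [filter_length_eq_card _ (Finset.sort_nodup _ _) x, Finset.sort_toFinset] at h1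
  exact h1

lemma stdz_emb (A : Finset ℤ) (s : List ℤ) (n : ℕ) (hs : IsPermList n s)
    (hc : A.card = n) : stdz (emb A s) = s := by
  have hnd := emb_nodup A s n hs hc
  have htf := emb_toFinset A s n hs hc
  unfold stdz
  conv_rhs => rw [← List.map_id s]
  unfold emb
  rw [List.map_map]
  unfold emb at hnd htf
  apply List.map_congr_left
  intro k hk
  obtain ⟨i, hi, rfl⟩ := mem_permList hs hk
  simp only [Function.comp, id]
  have hto : ((i : ℤ) + 1 - 1).toNat = i := by omega
  have hli : i < (A.sort (· ≤ ·)).length := by rw [Finset.length_sort]; omega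
  rw [filter_length_eq_card _ hnd _, htf]
  simp only [hto]
  rw [List.getD_eq_getElem _ _ hli, card_filter_sort A i hli]

lemma emb_stdz (l : List ℤ) (hl : l.Nodup) : emb l.toFinset (stdz l) = l := by
  unfold emb stdz
  rw [List.map_map]
  conv_rhs => rw [← List.map_id l]
  apply List.map_congr_left
  intro x hx
  simp only [Function.comp, id]
  have hto : (((l.filter (fun y => y < x)).length : ℤ) + 1 - 1).toNat
      = (l.filter (fun y => y < x)).length := by omega
  rw [hto, filter_length_eq_card l hl x]
  exact card_filter_lt_mem l.toFinset x (List.mem_toFinset.mpr hx)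


/-- The finset of permutation lists mapping to `T` under `phi`. -/
noncomputable def STreeF (T : Tree Unit) : Finset (List ℤ) :=
  (((List.range T.numNodes).map (fun k => (k : ℤ) + 1)).permutations.toFinset).filter
    (fun l => phi l = T)

lemma mem_STreeF (T : Tree Unit) (l : List ℤ) :
    l ∈ STreeF T ↔ IsPermList T.numNodes l ∧ phi l = T := by
  simp only [STreeF, Finset.mem_filter, List.mem_toFinset, List.mem_permutations]
  exact Iff.rfl

lemma STree_eq_STreeF (T : Tree Unit) : STree T = ↑(STreeF T) := by
  ext l
  simp only [STree, Set.mem_setOf_eq, Finset.mem_coe, mem_STreeF]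

lemma mem_node_decomp (T₁ T₂ : Tree Unit) (l : List ℤ)
    (hperm : IsPermList (T₁.numNodes + T₂.numNodes + 1) l)
    (hphi : phi l = Tree.node () T₁ T₂) :
    l = l.take T₁.numNodes ++ (1 : ℤ) :: l.drop (T₁.numNodes + 1) ∧
      phi (l.take T₁.numNodes) = T₁ ∧ phi (l.drop (T₁.numNodes + 1)) = T₂ ∧
      (l.take T₁.numNodes).length = T₁.numNodes ∧
      (l.drop (T₁.numNodes + 1)).length = T₂.numNodes := by
  have hlen : l.length = T₁.numNodes + T₂.numNodes + 1 := isPermList_length hperm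
  cases l with
  | nil => simp at hlen
  | cons a t =>
    have hmem := foldr_min_mem a t
    have hklt : (a :: t).idxOf (t.foldr min a) < (a :: t).length :=
      List.idxOf_lt_length_iff.mpr hmem
    have hchar := (isPermList_iff _ _).mp hperm
    have h1mem : (1 : ℤ) ∈ a :: t := by
      rw [← List.mem_toFinset, hchar.2, Finset.mem_Icc]
      constructor
      · exact le_refl 1
      · push_cast
        omega
    have hge1 : ∀ x ∈ a :: t, (1 : ℤ) ≤ x := by
      intro x hx
      rw [← List.mem_toFinset, hchar.2, Finset.mem_Icc] at hx
      exact hx.1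
    have hm1 : t.foldr min a = 1 :=
      le_antisymm (foldr_min_le a t 1 h1mem) (hge1 _ hmem)
    rw [phi] at hphi
    obtain ⟨h1, h2⟩ : phi ((a :: t).take ((a :: t).idxOf (t.foldr min a))) = T₁ ∧
        phi ((a :: t).drop ((a :: t).idxOf (t.foldr min a) + 1)) = T₂ := by
      simpa [BinaryTree.node.injEq] using hphi
    have hkn1 : (a :: t).idxOf (t.foldr min a) = T₁.numNodes := by
      have hnn := numNodes_phi ((a :: t).take ((a :: t).idxOf (t.foldr min a)))
      rw [h1, List.length_take] at hnn
      simp only [List.length_cons] at hklt hlen hnn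
      omega
    have hget : (a :: t)[(a :: t).idxOf (t.foldr min a)]'hklt = t.foldr min a :=
      List.getElem_idxOf hklt
    have hsplit : a :: t = (a :: t).take ((a :: t).idxOf (t.foldr min a)) ++
        (1 : ℤ) :: (a :: t).drop ((a :: t).idxOf (t.foldr min a) + 1) := by
      conv_lhs => rw [← List.take_append_drop ((a :: t).idxOf (t.foldr min a)) (a :: t)]
      rw [List.drop_eq_getElem_cons hklt, hget, hm1]
    rw [hkn1] at hsplit h1 h2
    refine ⟨hsplit, h1, h2, ?_, ?_⟩
    · simp only [List.length_take, List.length_cons] at *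
      omega
    · simp only [List.length_drop, List.length_cons] at *
      omega

/-- `|S_{T₁ ∨ T₂}| = C(|T| - 1, |T₁|) · |S_{T₁}| · |S_{T₂}|`. -/
theorem ncard_STree_node (T₁ T₂ : Tree Unit) :
    (STree (Tree.node () T₁ T₂)).ncard =
      Nat.choose ((Tree.node () T₁ T₂).numNodes - 1) T₁.numNodes *
        (STree T₁).ncard * (STree T₂).ncard := by
  classical
  set n1 := T₁.numNodes with hn1
  set n2 := T₂.numNodes with hn2
  have hnum : (Tree.node () T₁ T₂).numNodes = n1 + n2 + 1 := rfl
  set N : ℤ := ((n1 + n2 + 1 : ℕ) : ℤ) with hN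
  have hIcc : (Finset.Icc (2 : ℤ) N).card = n1 + n2 := by
    rw [Int.card_Icc]
    omega
  set P := (Finset.Icc (2 : ℤ) N).powersetCard n1 ×ˢ (STreeF T₁ ×ˢ STreeF T₂) with hP
  have key : (STreeF (Tree.node () T₁ T₂)).card = P.card := by
    apply Finset.card_nbij'
      (i := fun l => ((l.take n1).toFinset, (stdz (l.take n1), stdz (l.drop (n1 + 1)))))
      (j := fun p => emb p.1 p.2.1 ++ (1 : ℤ) :: emb (Finset.Icc (2 : ℤ) N \ p.1) p.2.2)
    · -- i maps into P
      intro l hl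
      dsimp only
      obtain ⟨hperm, hphi⟩ := (mem_STreeF _ _).mp hl
      rw [hnum] at hperm
      obtain ⟨hsp, h1, h2, hl1, hl2⟩ := mem_node_decomp T₁ T₂ l hperm hphi
      have hchar := (isPermList_iff _ _).mp hperm
      have hnodup' : (l.take n1 ++ (1 : ℤ) :: l.drop (n1 + 1)).Nodup := hsp ▸ hchar.1
      rw [List.nodup_append] at hnodup'
      obtain ⟨hnd1, hnd2', hdisj⟩ := hnodup'
      rw [List.nodup_cons] at hnd2'
      obtain ⟨h1notl2, hnd2⟩ := hnd2'
      have h1notl1 : (1 : ℤ) ∉ l.take n1 := fun hc => hdisj _ hc _ (by simp) rfl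
      have hmem_l : ∀ x ∈ l, 1 ≤ x ∧ x ≤ N := by
        intro x hx
        have hxx : x ∈ l.toFinset := List.mem_toFinset.mpr hx
        rw [hchar.2, Finset.mem_Icc] at hxx
        exact hxx
      rw [hP]
      simp only [Finset.mem_coe, Finset.mem_product]
      refine ⟨?_, ?_, ?_⟩
      · rw [Finset.mem_powersetCard]
        constructor
        · intro x hx
          rw [List.mem_toFinset] at hx
          rw [Finset.mem_Icc]
          have hx' := hmem_l x (List.mem_of_mem_take hx)
          have hne : x ≠ 1 := fun hc => h1notl1 (hc ▸ hx)
          constructor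
          · omega
          · exact hx'.2
        · rw [List.toFinset_card_of_nodup hnd1, hl1]
      · rw [mem_STreeF]
        constructor
        · have := stdz_isPermList _ hnd1
          rwa [hl1] at this
        · rw [phi_stdz _ hnd1, h1]
      · rw [mem_STreeF]
        constructor
        · have := stdz_isPermList _ hnd2
          rwa [hl2] at this
        · rw [phi_stdz _ hnd2, h2]
    · -- j maps into the source
      rintro ⟨A, s1, s2⟩ hp
      dsimp only
      rw [hP] at hp
      simp only [Finset.mem_coe, Finset.mem_product] at hp
      obtain ⟨hA, hs1, hs2⟩ := hp
      rw [Finset.mem_powersetCard] at hA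
      obtain ⟨hAsub, hAcard⟩ := hA
      rw [mem_STreeF] at hs1 hs2
      obtain ⟨hs1p, hs1phi⟩ := hs1
      obtain ⟨hs2p, hs2phi⟩ := hs2
      set B := Finset.Icc (2 : ℤ) N \ A with hBdef
      have hBsub : B ⊆ Finset.Icc (2 : ℤ) N := Finset.sdiff_subset
      have hBcard : B.card = n2 := by
        rw [hBdef, Finset.card_sdiff_of_subset hAsub, hIcc, hAcard]
        omega
      have he1tf := emb_toFinset A s1 n1 hs1p hAcard
      have he2tf := emb_toFinset B s2 n2 hs2p hBcard
      have he1nd := emb_nodup A s1 n1 hs1p hAcard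
      have he2nd := emb_nodup B s2 n2 hs2p hBcard
      have hmemA : ∀ x ∈ emb A s1, x ∈ A := fun x hx => he1tf ▸ List.mem_toFinset.mpr hx
      have hmemB : ∀ x ∈ emb B s2, x ∈ B := fun x hx => he2tf ▸ List.mem_toFinset.mpr hx
      rw [Finset.mem_coe, mem_STreeF]
      constructor
      · rw [hnum, isPermList_iff]
        constructor
        · rw [List.nodup_append]
          refine ⟨he1nd, ?_, ?_⟩
          · rw [List.nodup_cons]
            refine ⟨fun hc => ?_, he2nd⟩
            have := Finset.mem_Icc.mp (hBsub (hmemB 1 hc))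
            omega
          · intro x hx y hx' hxy
            subst hxy
            have hxA := hmemA x hx
            rcases List.mem_cons.mp hx' with h | h
            · have := Finset.mem_Icc.mp (hAsub (h ▸ hxA))
              omega
            · exact absurd hxA (Finset.mem_sdiff.mp (hmemB x h)).2
        · have htfe : (emb A s1 ++ (1 : ℤ) :: emb B s2).toFinset = A ∪ insert 1 B := by
            rw [List.toFinset_append, List.toFinset_cons, he1tf, he2tf]
          rw [htfe]
          ext x
          simp only [Finset.mem_union, Finset.mem_insert, Finset.mem_Icc]
          constructor
          · rintro (h | h | h)
            · have := Finset.mem_Icc.mp (hAsub h)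
              omega
            · subst h
              constructor
              · exact le_refl 1
              · omega
            · have := Finset.mem_Icc.mp (hBsub h)
              omega
          · rintro ⟨hx1, hxN⟩
            by_cases hx : x = 1
            · exact Or.inr (Or.inl hx)
            · have hx2 : x ∈ Finset.Icc (2 : ℤ) N := Finset.mem_Icc.mpr ⟨by omega, hxN⟩
              by_cases hxA : x ∈ A
              · exact Or.inl hxA
              · exact Or.inr (Or.inr (Finset.mem_sdiff.mpr ⟨hx2, hxA⟩))
      · have happ : ∀ x ∈ emb A s1 ++ emb B s2, (1 : ℤ) < x := by
          intro x hx
          rcases List.mem_append.mp hx with h | h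
          · have := Finset.mem_Icc.mp (hAsub (hmemA x h))
            omega
          · have := Finset.mem_Icc.mp (hBsub (hmemB x h))
            omega
        rw [phi_append _ _ 1 happ, phi_emb A s1 n1 hs1p hAcard,
          phi_emb B s2 n2 hs2p hBcard, hs1phi, hs2phi]
    · -- left inverse
      intro l hl
      dsimp only
      obtain ⟨hperm, hphi⟩ := (mem_STreeF _ _).mp hl
      rw [hnum] at hperm
      obtain ⟨hsp, h1, h2, hl1, hl2⟩ := mem_node_decomp T₁ T₂ l hperm hphi
      have hchar := (isPermList_iff _ _).mp hperm
      have hnodup' : (l.take n1 ++ (1 : ℤ) :: l.drop (n1 + 1)).Nodup := hsp ▸ hchar.1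
      rw [List.nodup_append] at hnodup'
      obtain ⟨hnd1, hnd2', hdisj⟩ := hnodup'
      rw [List.nodup_cons] at hnd2'
      obtain ⟨h1notl2, hnd2⟩ := hnd2'
      have h1notl1 : (1 : ℤ) ∉ l.take n1 := fun hc => hdisj _ hc _ (by simp) rfl
      have hmem_iff : ∀ x, x ∈ l ↔ (x ∈ l.take n1 ∨ x = 1 ∨ x ∈ l.drop (n1 + 1)) := by
        intro x
        conv_lhs => rw [hsp]
        simp [hn1]
      have hBtf : Finset.Icc (2 : ℤ) N \ (l.take n1).toFinset = (l.drop (n1 + 1)).toFinset := by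
        ext x
        simp only [Finset.mem_sdiff, Finset.mem_Icc, List.mem_toFinset]
        constructor
        · rintro ⟨⟨hx2, hxN⟩, hxn1⟩
          have hxl : x ∈ l := by
            rw [← List.mem_toFinset, hchar.2, Finset.mem_Icc]
            constructor
            · omega
            · exact hxN
          rcases (hmem_iff x).mp hxl with h | h | h
          · exact absurd h hxn1
          · omega
          · exact h
        · intro hx
          have hxl : x ∈ l := (hmem_iff x).mpr (Or.inr (Or.inr hx))
          have hb : x ∈ l.toFinset := List.mem_toFinset.mpr hxl
          rw [hchar.2, Finset.mem_Icc] at hb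
          have hx1 : x ≠ 1 := fun hc => h1notl2 (hc ▸ hx)
          have hxn1 : x ∉ l.take n1 := fun hc => hdisj _ hc _ (List.mem_cons_of_mem _ hx) rfl
          exact ⟨⟨by omega, hb.2⟩, hxn1⟩
      rw [hBtf, emb_stdz _ hnd1, emb_stdz _ hnd2]
      exact hsp.symm
    · -- right inverse
      rintro ⟨A, s1, s2⟩ hp
      dsimp only
      rw [hP] at hp
      simp only [Finset.mem_coe, Finset.mem_product] at hp
      obtain ⟨hA, hs1, hs2⟩ := hp
      rw [Finset.mem_powersetCard] at hA
      obtain ⟨hAsub, hAcard⟩ := hA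
      rw [mem_STreeF] at hs1 hs2
      obtain ⟨hs1p, hs1phi⟩ := hs1
      obtain ⟨hs2p, hs2phi⟩ := hs2
      set B := Finset.Icc (2 : ℤ) N \ A with hBdef
      have hBcard : B.card = n2 := by
        rw [hBdef, Finset.card_sdiff_of_subset hAsub, hIcc, hAcard]
        omega
      have hlen1 : (emb A s1).length = n1 := by
        rw [emb_length, isPermList_length hs1p]
      have htake : (emb A s1 ++ (1 : ℤ) :: emb B s2).take n1 = emb A s1 :=
        List.take_left' hlen1
      have hdrop : (emb A s1 ++ (1 : ℤ) :: emb B s2).drop (n1 + 1) = emb B s2 := by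
        rw [show emb A s1 ++ (1 : ℤ) :: emb B s2 = (emb A s1 ++ [1]) ++ emb B s2 by simp]
        exact List.drop_left' (by simp [hlen1])
      rw [htake, hdrop, emb_toFinset A s1 n1 hs1p hAcard, stdz_emb A s1 n1 hs1p hAcard,
        stdz_emb B s2 n2 hs2p hBcard]
  rw [STree_eq_STreeF, STree_eq_STreeF, STree_eq_STreeF, Set.ncard_coe_finset,
    Set.ncard_coe_finset, Set.ncard_coe_finset, key, hP, Finset.card_product,
    Finset.card_product, Finset.card_powersetCard, hIcc, hnum, Nat.add_sub_cancel,
    mul_assoc]
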